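/- Let x > 0 be a real number and let k \ge 1 be an integer. With a_k = \sum_{j=0}^k x^j/j!, b_k = \sum_{j=1}^k j\,x^j/j!, and c_k = \sum_{j=1}^k j^2 x^j/j!, one has a_k c_k - b_k^2 \le a_{k-1} b_k. -/

import Mathlib

open Filter

/-- `aa k x = ∑_{j=0}^k x^j / j!` -/
noncomputable def aa (k : ℕ) (x : ℝ) : ℝ := ∑ j ∈ Finset.range (k + 1), x ^ j / (Nat.factorial j)

/-- `bb k x = ∑_{j=1}^k j x^j / j!` -/
noncomputable def bb (k : ℕ) (x : ℝ) : ℝ := ∑ j ∈ Finset.Icc 1 k, (j : ℝ) * x ^ j / (Nat.factorial j)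

/-- `cc k x = ∑_{j=1}^k j² x^j / j!` -/
noncomputable def cc (k : ℕ) (x : ℝ) : ℝ := ∑ j ∈ Finset.Icc 1 k, (j : ℝ) ^ 2 * x ^ j / (Nat.factorial j)

noncomputable def r3 (n m : ℕ) (x : ℝ) : ℝ := aa n x + aa m x
noncomputable def r12 (n m : ℕ) (x : ℝ) : ℝ := bb n x * bb m x
noncomputable def r1 (n m : ℕ) (x : ℝ) : ℝ := r3 n m x * cc n x - (bb n x) ^ 2
noncomputable def r2 (n m : ℕ) (x : ℝ) : ℝ := r3 n m x * cc m x - (bb m x) ^ 2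

/-- The first-intensity (Kac–Rice) integrand of a Weyl random harmonic polynomial of
bidegree `(n, m)`, evaluated at `z`, with `x = |z|²`. -/
noncomputable def F (n m : ℕ) (z : ℂ) : ℝ :=
  (1 / ‖z‖ ^ 2) *
    (((r1 n m (‖z‖ ^ 2)) ^ 2 + (r2 n m (‖z‖ ^ 2)) ^ 2 - 2 * (r12 n m (‖z‖ ^ 2)) ^ 2) /
      ((r3 n m (‖z‖ ^ 2)) ^ 2 *
        Real.sqrt ((r1 n m (‖z‖ ^ 2) + r2 n m (‖z‖ ^ 2)) ^ 2 - 4 * (r12 n m (‖z‖ ^ 2)) ^ 2)))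

/-- The expected number of zeros in `ℂ`, as given by the Kac–Rice formula. -/
noncomputable def I (n m : ℕ) : ℝ := (1 / Real.pi) * ∫ z : ℂ, F n m z

lemma bb_succ (m : ℕ) (x : ℝ) :
    bb (m + 1) x = bb m x + (m + 1 : ℝ) * x ^ (m + 1) / (Nat.factorial (m + 1)) := by
  unfold bb
  rw [Finset.sum_Icc_succ_top (by omega)]
  push_cast; ring

lemma cc_succ (m : ℕ) (x : ℝ) :
    cc (m + 1) x = cc m x + ((m + 1 : ℝ)) ^ 2 * x ^ (m + 1) / (Nat.factorial (m + 1)) := by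
  unfold cc
  rw [Finset.sum_Icc_succ_top (by omega)]
  push_cast; ring

lemma aa_succ (m : ℕ) (x : ℝ) :
    aa (m + 1) x = aa m x + x ^ (m + 1) / (Nat.factorial (m + 1)) := by
  unfold aa
  rw [Finset.sum_range_succ]

lemma bb_eq (m : ℕ) (x : ℝ) : bb (m + 1) x = x * aa m x := by
  induction m with
  | zero => simp [bb, aa, Nat.factorial]
  | succ n ih =>
      rw [bb_succ, ih, aa_succ]
      have : ((Nat.factorial (n + 1 + 1)) : ℝ) = (n + 1 + 1 : ℝ) * (Nat.factorial (n + 1)) := by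
        push_cast [Nat.factorial_succ]; ring
      rw [this]
      field_simp [this]
      push_cast
      ring

lemma cc_eq (m : ℕ) (x : ℝ) : cc (m + 1) x = x * (aa m x + bb m x) := by
  induction m with
  | zero => simp [cc, bb, aa, Nat.factorial]
  | succ n ih =>
      rw [cc_succ, ih, aa_succ, bb_succ]
      have : ((Nat.factorial (n + 1 + 1)) : ℝ) = (n + 1 + 1 : ℝ) * (Nat.factorial (n + 1)) := by
        push_cast [Nat.factorial_succ]; ring
      rw [this]
      field_simp [this]
      push_cast
      ring

lemma bb_le (m : ℕ) (x : ℝ) (hx : 0 < x) : bb m x ≤ m * aa m x := by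
  have h1 : bb m x ≤ ∑ j ∈ Finset.Icc 1 m, (m : ℝ) * x ^ j / (Nat.factorial j) := by
    apply Finset.sum_le_sum
    intro j hj
    rw [Finset.mem_Icc] at hj
    have : (j : ℝ) ≤ m := by exact_mod_cast hj.2
    gcongr
  refine h1.trans ?_
  have h2 : ∑ j ∈ Finset.Icc 1 m, (m : ℝ) * x ^ j / (Nat.factorial j)
      ≤ ∑ j ∈ Finset.range (m + 1), (m : ℝ) * x ^ j / (Nat.factorial j) := by
    apply Finset.sum_le_sum_of_subset_of_nonneg
    · intro j hj; rw [Finset.mem_Icc] at hj; rw [Finset.mem_range]; omega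
    · intro j _ _; positivity
  refine h2.trans_eq ?_
  rw [aa, Finset.mul_sum]
  apply Finset.sum_congr rfl
  intro j _; ring


/-- Lemma 3.3: `a_k c_k - b_k² ≤ a_{k-1} b_k` for `k ≥ 1`. -/
theorem weyl_ac_sub_b_sq (x : ℝ) (hx : 0 < x) (k : ℕ) (hk : 1 ≤ k) :
    aa k x * cc k x - (bb k x) ^ 2 ≤ aa (k - 1) x * bb k x := by
  obtain ⟨m, rfl⟩ : ∃ m, k = m + 1 := ⟨k - 1, by omega⟩
  simp only [Nat.add_sub_cancel]
  rw [bb_eq, cc_eq, aa_succ]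
  set A := aa m x
  set B := bb m x
  set T := x ^ (m + 1) / (Nat.factorial (m + 1))
  have hE : x * A = B + (m + 1 : ℝ) * T := by
    rw [← bb_eq, bb_succ]; simp [T]; ring
  have key : B ≤ m * A := bb_le m x hx
  have hT : 0 < T := by positivity
  have hD : (A + T) * (x * (A + B)) - (x * A) ^ 2 - A * (x * A)
      = x * T * (B - (m : ℝ) * A) - x * A * (x * A - (B + (m + 1 : ℝ) * T)) := by ring
  have h1 : x * T * (B - (m : ℝ) * A) ≤ 0 :=
    mul_nonpos_of_nonneg_of_nonpos (by positivity) (by linarith)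
  have h2 : x * A - (B + (m + 1 : ℝ) * T) = 0 := by rw [hE]; ring
  have h3 : x * A * (x * A - (B + (m + 1 : ℝ) * T)) = 0 := by rw [h2, mul_zero]
  linarith [hD, h1, h3]
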